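/- Suppose a nonnegative continuous function f on [0, T] satisfies the integral inequality f(t) ≤ δ + η ∫₀ᵗ f(τ)^p dτ with p > 1 and η, δ > 0; then for all t small enough that the polynomial η t y^p − y + δ has two positive roots, one has sup_{τ ≤ t} f(τ) ≤ y₁(η t, δ), the smaller positive root of η t y^p − y + δ = 0, provided f is continuous and f(0) ≤ δ. -/

import Mathlib

open Set MeasureTheory

/-- The smaller positive root of `η y^p − y + δ = 0`. -/
noncomputable def y1 (p η δ : ℝ) : ℝ := sInf {y : ℝ | 0 < y ∧ η * y ^ p - y + δ = 0}

/-- Strict convexity consequence: if `Q(x) ≤ 0` and `Q(z) ≤ 0` with `0 ≤ x < y < z`,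
then `Q(y) < 0` for `Q(y) = a y^p - y + δ`. -/
lemma conv_aux (p a δ : ℝ) (hp : 1 < p) (ha : 0 < a)
    (x y z : ℝ) (hx : 0 ≤ x) (hxy : x < y) (hyz : y < z)
    (hQx : a * x ^ p - x + δ ≤ 0) (hQz : a * z ^ p - z + δ ≤ 0) :
    a * y ^ p - y + δ < 0 := by
  have hxz : x < z := hxy.trans hyz
  have hzx : (0:ℝ) < z - x := by linarith
  set θ : ℝ := (z - y) / (z - x) with hθdef
  set μ : ℝ := (y - x) / (z - x) with hμdef
  have hθ : 0 < θ := div_pos (by linarith) hzx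
  have hμ : 0 < μ := div_pos (by linarith) hzx
  have hsum : θ + μ = 1 := by rw [hθdef, hμdef]; field_simp; ring
  have hy' : θ * x + μ * z = y := by
    rw [hθdef, hμdef]
    field_simp
    ring
  have hy : θ • x + μ • z = y := by rw [smul_eq_mul, smul_eq_mul]; exact hy'
  have hconv := (strictConvexOn_rpow hp).2 (show x ∈ Ici (0:ℝ) from hx)
    (show z ∈ Ici (0:ℝ) from by simp only [mem_Ici]; linarith) (ne_of_lt hxz) hθ hμ hsum
  rw [hy] at hconv
  simp only [smul_eq_mul] at hconv
  have key : a * (θ * x ^ p + μ * z ^ p) - y + δ ≤ 0 := by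
    have h3 : a * (θ * x ^ p + μ * z ^ p) - y + δ
        = θ * (a * x ^ p - x + δ) + μ * (a * z ^ p - z + δ) := by
      linear_combination hy' - δ * hsum
    rw [h3]
    exact add_nonpos (mul_nonpos_of_nonneg_of_nonpos hθ.le hQx)
      (mul_nonpos_of_nonneg_of_nonpos hμ.le hQz)
  have := mul_lt_mul_of_pos_left hconv ha
  linarith

/-- If a nonnegative continuous function `f` on `[0, T]` satisfies
`f(t) ≤ δ + η ∫₀ᵗ f(τ)^p dτ` with `p > 1`, `η, δ > 0`, and `f(0) ≤ δ`, then for all `t`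
such that the polynomial `η t y^p − y + δ` has two positive roots, one has
`sup_{τ ≤ t} f(τ) ≤ y₁(η t, δ)`, the smaller positive root of `η t y^p − y + δ = 0`. -/
theorem stmt4 (T p η δ : ℝ) (hT : 0 < T) (hp : 1 < p) (hη : 0 < η) (hδ : 0 < δ)
    (f : ℝ → ℝ) (hf : ContinuousOn f (Icc 0 T))
    (hnn : ∀ t ∈ Icc (0:ℝ) T, 0 ≤ f t)
    (h0 : f 0 ≤ δ)
    (hineq : ∀ t ∈ Icc (0:ℝ) T, f t ≤ δ + η * ∫ τ in (0:ℝ)..t, f τ ^ p) :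
    ∀ t ∈ Icc (0:ℝ) T,
      (∃ z₁ z₂ : ℝ, 0 < z₁ ∧ z₁ < z₂ ∧
          (η * t) * z₁ ^ p - z₁ + δ = 0 ∧ (η * t) * z₂ ^ p - z₂ + δ = 0) →
      ∀ τ ∈ Icc (0:ℝ) t, f τ ≤ y1 p (η * t) δ := by
  rintro t ht ⟨z₁, z₂, hz₁, hz12, hQ1, hQ2⟩ τ hτ
  have hp0 : (0:ℝ) < p := lt_trans one_pos hp
  -- t must be positive
  have htpos : 0 < t := by
    rcases eq_or_lt_of_le ht.1 with h | h
    · exfalso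
      rw [← h] at hQ1 hQ2
      simp only [mul_zero, zero_mul] at hQ1 hQ2
      linarith
    · exact h
  set a : ℝ := η * t with hadef
  have ha : 0 < a := mul_pos hη htpos
  -- any positive root is ≥ δ
  have hroot_ge : ∀ w : ℝ, 0 < w → a * w ^ p - w + δ = 0 → δ ≤ w := by
    intro w hw hQw
    nlinarith [Real.rpow_nonneg hw.le p, mul_nonneg ha.le (Real.rpow_nonneg hw.le p)]
  have hz₁δ : δ ≤ z₁ := hroot_ge z₁ hz₁ hQ1
  -- the root set is exactly {z₁, z₂}
  have hset : {y : ℝ | 0 < y ∧ a * y ^ p - y + δ = 0} = {z₁, z₂} := by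
    ext w
    constructor
    · rintro ⟨hw, hQw⟩
      rcases lt_trichotomy w z₁ with h1 | h1 | h1
      · exfalso
        have := conv_aux p a δ hp ha w z₁ z₂ hw.le h1 hz12 (le_of_eq hQw) (le_of_eq hQ2)
        linarith [hQ1, this]
      · exact Or.inl h1
      · rcases lt_trichotomy w z₂ with h2 | h2 | h2
        · exfalso
          have := conv_aux p a δ hp ha z₁ w z₂ hz₁.le h1 h2 (le_of_eq hQ1) (le_of_eq hQ2)
          linarith [hQw, this]
        · exact Or.inr h2
        · exfalso
          have := conv_aux p a δ hp ha z₁ z₂ w hz₁.le hz12 h2 (le_of_eq hQ1) (le_of_eq hQw)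
          linarith [hQ2, this]
    · rintro (rfl | rfl)
      · exact ⟨hz₁, hQ1⟩
      · exact ⟨hz₁.trans hz12, hQ2⟩
  have hy1 : y1 p a δ = z₁ := by
    rw [y1, hset, csInf_pair]
    exact min_eq_left hz12.le
  rw [hy1]
  -- Now show f τ ≤ z₁
  by_contra hcon
  push_neg at hcon
  -- choose c strictly between z₁ and min z₂ (f τ)
  set c : ℝ := min ((z₁ + f τ) / 2) ((z₁ + z₂) / 2) with hcdef
  have hc1 : z₁ < c := lt_min (by linarith) (by linarith)
  have hc2 : c < z₂ := lt_of_le_of_lt (min_le_right _ _) (by linarith)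
  have hc3 : c < f τ := lt_of_le_of_lt (min_le_left _ _) (by linarith)
  have hcpos : 0 < c := lt_trans hz₁ hc1
  have hQc : a * c ^ p - c + δ < 0 :=
    conv_aux p a δ hp ha z₁ c z₂ hz₁.le hc1 hc2 (le_of_eq hQ1) (le_of_eq hQ2)
  -- the set of times in [0,t] where f ≥ c
  set S : Set ℝ := Icc 0 t ∩ f ⁻¹' (Ici c) with hSdef
  have hIccT : Icc (0:ℝ) t ⊆ Icc 0 T := Icc_subset_Icc le_rfl ht.2
  have hSne : S.Nonempty := ⟨τ, hτ, le_of_lt hc3⟩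
  have hSclosed : IsClosed S :=
    (hf.mono hIccT).preimage_isClosed_of_isClosed isClosed_Icc isClosed_Ici
  have hSbdd : BddBelow S := ⟨0, fun s hs => hs.1.1⟩
  set τ₁ : ℝ := sInf S with hτ₁def
  have hτ₁S : τ₁ ∈ S := hSclosed.csInf_mem hSne hSbdd
  have hτ₁t : τ₁ ∈ Icc (0:ℝ) t := hτ₁S.1
  have hτ₁T : τ₁ ∈ Icc (0:ℝ) T := hIccT hτ₁t
  have hfτ₁ : c ≤ f τ₁ := hτ₁S.2
  have hτ₁pos : 0 < τ₁ := by
    rcases eq_or_lt_of_le hτ₁t.1 with h | h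
    · exfalso; rw [← h] at hfτ₁; linarith
    · exact h
  -- f < c strictly before τ₁
  have hbefore : ∀ s ∈ Ico (0:ℝ) τ₁, f s < c := by
    intro s hs
    by_contra hsc
    push_neg at hsc
    have hsS : s ∈ S := ⟨⟨hs.1, le_trans hs.2.le hτ₁t.2⟩, hsc⟩
    have := csInf_le hSbdd hsS
    linarith [hs.2]
  -- f τ₁ ≤ c by continuity from the left
  have hfle : f τ₁ ≤ c := by
    have hcw : ContinuousWithinAt f (Ico 0 τ₁) τ₁ :=
      (hf τ₁ hτ₁T).mono (fun s hs => ⟨hs.1, le_trans hs.2.le hτ₁T.2⟩)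
    have : Filter.NeBot (nhdsWithin τ₁ (Ico 0 τ₁)) := right_nhdsWithin_Ico_neBot hτ₁pos
    exact le_of_tendsto hcw (Filter.eventually_inf_principal.mpr
      (Filter.Eventually.of_forall (fun s hs => (hbefore s hs).le)))
  -- f ≤ c on [0, τ₁]
  have hfc : ∀ s ∈ Icc (0:ℝ) τ₁, f s ≤ c := by
    intro s hs
    rcases eq_or_lt_of_le hs.2 with h | h
    · rw [h]; exact hfle
    · exact (hbefore s ⟨hs.1, h⟩).le
  -- integral bound
  have hsub : Icc (0:ℝ) τ₁ ⊆ Icc 0 T := Icc_subset_Icc le_rfl hτ₁T.2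
  have hcontp : ContinuousOn (fun s => f s ^ p) (Icc 0 τ₁) :=
    (hf.mono hsub).rpow_const (fun s _ => Or.inr hp0.le)
  have hint : IntervalIntegrable (fun s => f s ^ p) volume 0 τ₁ :=
    hcontp.intervalIntegrable_of_Icc hτ₁pos.le
  have hmono : (∫ s in (0:ℝ)..τ₁, f s ^ p) ≤ ∫ _ in (0:ℝ)..τ₁, c ^ p := by
    apply intervalIntegral.integral_mono_on hτ₁pos.le hint intervalIntegrable_const
    intro s hs
    exact Real.rpow_le_rpow (hnn s (hsub hs)) (hfc s hs) hp0.le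
  rw [intervalIntegral.integral_const, smul_eq_mul, sub_zero] at hmono
  have hbound := hineq τ₁ hτ₁T
  have hcp : 0 ≤ c ^ p := Real.rpow_nonneg hcpos.le p
  have h1 : η * (∫ s in (0:ℝ)..τ₁, f s ^ p) ≤ η * (τ₁ * c ^ p) :=
    mul_le_mul_of_nonneg_left hmono hη.le
  have h2 : η * (τ₁ * c ^ p) ≤ η * (t * c ^ p) := by
    apply mul_le_mul_of_nonneg_left _ hη.le
    exact mul_le_mul_of_nonneg_right hτ₁t.2 hcp
  have : c ≤ δ + a * c ^ p := by
    calc c ≤ f τ₁ := hfτ₁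
    _ ≤ δ + η * ∫ s in (0:ℝ)..τ₁, f s ^ p := hbound
    _ ≤ δ + η * (t * c ^ p) := by linarith
    _ = δ + a * c ^ p := by rw [hadef]; ring_nf
  linarith [hQc]
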